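/- Let n = 7 and D_{14} = ⟨a, b | a^7 = b^2 = 1, bab = a^{-1}⟩, and S_0 = {b, ab, a^3 b}. Then no automorphism of D_{14} of order 2 fixes S_0 setwise, and consequently Aut(D_{14}, S_0) is the cyclic group of order 3 generated by σ_{2,1} : a ↦ a^2, b ↦ ab. -/

import Mathlib

open DihedralGroup

private lemma r_pow (k : ZMod 7) (m : ℕ) :
    (r k : DihedralGroup 7) ^ m = r ((m : ZMod 7) * k) := by
  induction m with
  | zero => simp [one_def, -r_zero]
  | succ n ih => rw [pow_succ, ih, r_mul_r]; congr 1; push_cast; ring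

private lemma dec1 : ∀ k s : ZMod 7, k * (k * 1) = 1 → s + k * s = 0 →
    (∀ t : ZMod 7, (t = s ∨ t = s + k * 6 ∨ t = s + k * 4) ↔ (t = 0 ∨ t = 6 ∨ t = 4)) →
    k = 1 ∧ s = 0 := by decide

private lemma dec2 : ∀ k s : ZMod 7, k ≠ 0 →
    (∀ t : ZMod 7, (t = s ∨ t = s + k * 6 ∨ t = s + k * 4) ↔ (t = 0 ∨ t = 6 ∨ t = 4)) →
    (k = 1 ∧ s = 0) ∨ (k = 2 ∧ s = 6) ∨ (k = 4 ∧ s = 4) := by decide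

private lemma key (ψ : MulAut (DihedralGroup 7)) :
    ∃ k s : ZMod 7, k ≠ 0 ∧ (∀ i, ψ (r i) = r (k * i)) ∧
      (∀ i, ψ (sr i) = sr (s + k * i)) := by
  have hr2 : (r 2 : DihedralGroup 7) ≠ 1 := by
    rw [one_def]; intro h; exact (by decide : (2 : ZMod 7) ≠ 0) (r.inj h)
  obtain ⟨k, hk⟩ : ∃ k, ψ (r 1) = r k := by
    rcases h : ψ (r 1) with k | k
    · exact ⟨k, rfl⟩
    · exfalso
      apply hr2
      apply ψ.injective
      rw [show (r 2 : DihedralGroup 7) = r 1 * r 1 by rw [r_mul_r]; norm_num,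
        map_mul, h, sr_mul_sr, sub_self, map_one, one_def]
  obtain ⟨s, hs⟩ : ∃ s, ψ (sr 0) = sr s := by
    rcases h : ψ (sr 0) with c | c
    · exfalso
      have h1 : ψ (sr 0 * sr 0) = r c * r c := by rw [map_mul, h]
      rw [sr_mul_sr, sub_self, ← one_def, map_one, r_mul_r] at h1
      have hc : c + c = 0 := by rw [one_def] at h1; exact (r.inj h1).symm
      have hc0 : c = 0 := by
        have hd : ∀ c : ZMod 7, c + c = 0 → c = 0 := by decide
        exact hd c hc
      subst hc0
      have : (sr 0 : DihedralGroup 7) = 1 := ψ.injective (by rw [h, ← one_def, map_one])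
      simp [one_def, -r_zero] at this
    · exact ⟨c, rfl⟩
  have hk0 : k ≠ 0 := by
    intro h
    subst h
    have : (r 1 : DihedralGroup 7) = 1 := ψ.injective (by rw [hk, ← one_def, map_one])
    rw [one_def] at this
    exact (by decide : (1 : ZMod 7) ≠ 0) (r.inj this)
  have hR : ∀ i, ψ (r i) = r (k * i) := by
    intro i
    have h1 : (r i : DihedralGroup 7) = (r 1) ^ i.val := by
      rw [r_one_pow]; congr 1; simp [ZMod.natCast_val, ZMod.cast_id]
    rw [h1, map_pow, hk, _root_.r_pow]
    congr 1
    rw [mul_comm]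
    congr 1
    simp [ZMod.natCast_val, ZMod.cast_id]
  refine ⟨k, s, hk0, hR, fun i => ?_⟩
  have h1 : (sr i : DihedralGroup 7) = sr 0 * r i := by rw [sr_mul_r, zero_add]
  rw [h1, map_mul, hs, hR, sr_mul_r]

private lemma setEq (a b c x y z : ZMod 7) :
    ({sr a, sr b, sr c} : Set (DihedralGroup 7)) = {sr x, sr y, sr z} ↔
      ∀ t : ZMod 7, (t = a ∨ t = b ∨ t = c) ↔ (t = x ∨ t = y ∨ t = z) := by
  constructor
  · intro h t
    have := Set.ext_iff.mp h (sr t)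
    simpa using this
  · intro h
    ext g
    rcases g with i | t
    · simp
    · simpa using h t

theorem dihedral14_aut_S0 (S₀ : Set (DihedralGroup 7))
    (hS₀ : S₀ = {DihedralGroup.sr 0, DihedralGroup.r 1 * DihedralGroup.sr 0,
      DihedralGroup.r 3 * DihedralGroup.sr 0})
    (φ : MulAut (DihedralGroup 7))
    (hφr : ∀ i : ZMod 7, φ (DihedralGroup.r i) = DihedralGroup.r (2 * i))
    (hφs : ∀ j : ZMod 7, φ (DihedralGroup.r j * DihedralGroup.sr 0) =
      DihedralGroup.r (2 * j + 1) * DihedralGroup.sr 0) :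
    (∀ ψ : MulAut (DihedralGroup 7), orderOf ψ = 2 → ⇑ψ '' S₀ ≠ S₀) ∧
    ⇑φ '' S₀ = S₀ ∧ orderOf φ = 3 ∧
    (∀ ψ : MulAut (DihedralGroup 7), ⇑ψ '' S₀ = S₀ → ψ ∈ Subgroup.zpowers φ) := by
  have h7 : (7 : ZMod 7) = 0 := by decide
  have hS : S₀ = {sr 0, sr 6, sr 4} := by
    rw [hS₀, r_mul_sr, r_mul_sr]
    norm_num
    congr 1 <;> decide
  -- formula for φ on reflections
  have hφsr : ∀ m : ZMod 7, φ (sr m) = sr (2 * m + 6) := by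
    intro m
    have := hφs (-m)
    rw [r_mul_sr, r_mul_sr, zero_sub, zero_sub, neg_neg] at this
    rw [this]
    congr 1
    linear_combination -h7
  -- image of S₀ under any automorphism with parameters k, s
  have himg : ∀ (ψ : MulAut (DihedralGroup 7)) (s k : ZMod 7),
      (∀ i, ψ (sr i) = sr (s + k * i)) →
      ⇑ψ '' S₀ = {sr s, sr (s + k * 6), sr (s + k * 4)} := by
    intro ψ s k hs
    rw [hS, Set.image_insert_eq, Set.image_insert_eq, Set.image_singleton,
      hs, hs, hs, mul_zero, add_zero]
  refine ⟨?_, ?_, ?_, ?_⟩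
  · -- no order-2 automorphism fixes S₀
    intro ψ h2 hset
    obtain ⟨k, s, hk0, hR, hSr⟩ := key ψ
    have hP : ∀ t : ZMod 7, (t = s ∨ t = s + k * 6 ∨ t = s + k * 4) ↔
        (t = 0 ∨ t = 6 ∨ t = 4) := by
      rw [← setEq, ← himg ψ s k hSr, hset, hS]
    have hpow : ψ ^ 2 = 1 := by rw [← h2]; exact pow_orderOf_eq_one ψ
    have hk2 : k * (k * 1) = 1 := by
      have := congrArg (fun f : MulAut (DihedralGroup 7) => f (r 1)) hpow
      simp only [pow_succ, pow_zero, one_mul, MulAut.mul_apply, MulAut.one_apply, hR] at this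
      have h1 := r.inj this
      rwa [mul_one] at *
    have hks : s + k * s = 0 := by
      have := congrArg (fun f : MulAut (DihedralGroup 7) => f (sr 0)) hpow
      simp only [pow_succ, pow_zero, one_mul, MulAut.mul_apply, MulAut.one_apply, hSr,
        mul_zero, add_zero] at this
      exact sr.inj this
    have hks1 : k = 1 ∧ s = 0 := dec1 k s hk2 hks hP
    obtain ⟨hk1, hs0⟩ := hks1
    subst hk1; subst hs0
    have hψ1 : ψ = 1 := by
      apply MulEquiv.ext
      intro g
      rcases g with i | i
      · rw [hR]; simp
      · rw [hSr]; simp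
    rw [hψ1] at h2
    simp at h2
  · -- φ fixes S₀
    have hφSr : ∀ i, φ (sr i) = sr (6 + 2 * i) := by
      intro i; rw [hφsr]; congr 1; ring
    rw [himg φ 6 2 hφSr, hS, setEq]
    decide
  · -- orderOf φ = 3
    haveI : Fact (Nat.Prime 3) := ⟨by norm_num⟩
    apply orderOf_eq_prime
    · apply MulEquiv.ext
      intro g
      simp only [pow_succ, pow_zero, one_mul, MulAut.mul_apply, MulAut.one_apply]
      rcases g with i | i
      · rw [hφr, hφr, hφr]; congr 1; linear_combination i * h7
      · rw [hφsr, hφsr, hφsr]; congr 1; linear_combination (i + 6) * h7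
    · intro h
      have := hφr 1
      rw [h] at this
      simp only [MulAut.one_apply, mul_one] at this
      exact (by decide : (1 : ZMod 7) ≠ 2) (r.inj this)
  · -- any automorphism fixing S₀ is a power of φ
    intro ψ hset
    obtain ⟨k, s, hk0, hR, hSr⟩ := key ψ
    have hP : ∀ t : ZMod 7, (t = s ∨ t = s + k * 6 ∨ t = s + k * 4) ↔
        (t = 0 ∨ t = 6 ∨ t = 4) := by
      rw [← setEq, ← himg ψ s k hSr, hset, hS]
    have hcases : (k = 1 ∧ s = 0) ∨ (k = 2 ∧ s = 6) ∨ (k = 4 ∧ s = 4) :=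
      dec2 k s hk0 hP
    rcases hcases with ⟨hk, hs⟩ | ⟨hk, hs⟩ | ⟨hk, hs⟩ <;> subst hk <;> subst hs
    · have hψ1 : ψ = 1 := by
        apply MulEquiv.ext
        intro g
        rcases g with i | i
        · rw [hR]; simp
        · rw [hSr]; simp
      rw [hψ1]
      exact Subgroup.one_mem _
    · have hψφ : ψ = φ := by
        apply MulEquiv.ext
        intro g
        rcases g with i | i
        · rw [hR, hφr]
        · rw [hSr, hφsr]; congr 1; ring
      rw [hψφ]
      exact Subgroup.mem_zpowers φ
    · have hψφ : ψ = φ ^ 2 := by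
        apply MulEquiv.ext
        intro g
        simp only [pow_succ, pow_zero, one_mul, MulAut.mul_apply]
        rcases g with i | i
        · rw [hR, hφr, hφr]; congr 1; ring
        · rw [hSr, hφsr, hφsr]; congr 1; linear_combination -(2 * h7)
      rw [hψφ]
      exact Subgroup.pow_mem _ (Subgroup.mem_zpowers φ) 2
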